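/- For the tree frames over a countably infinite alphabet (with 0 not in the alphabet): Log(N_ω(F_in)) = D, Log(N_ω(F_rn)) = T, Log(N_ω(F_it)) = D4, and Log(N_ω(F_rt)) = S4. -/

import Mathlib

set_option autoImplicit false

/-- Modal formulas with `n` modalities (propositional letters indexed by `ℕ`). -/
inductive MFormula (n : ℕ) : Type
  | prop : ℕ → MFormula n
  | bot  : MFormula n
  | imp  : MFormula n → MFormula n → MFormula n
  | box  : Fin n → MFormula n → MFormula n

namespace MFormula

/-- Negation as an abbreviation: ¬φ := φ → ⊥. -/
def neg {n : ℕ} (φ : MFormula n) : MFormula n := φ.imp .bot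

/-- Uniform substitution of formulas for propositional letters. -/
def subst {n : ℕ} (s : ℕ → MFormula n) : MFormula n → MFormula n
  | prop p  => s p
  | bot     => bot
  | imp φ ψ => imp (φ.subst s) (ψ.subst s)
  | box i φ => box i (φ.subst s)

end MFormula

/-- A classical tautology: true under every boolean valuation of formulas
(a valuation respecting `⊥` and `→`, arbitrary on letters and boxed formulas). -/
def IsTautology {n : ℕ} (φ : MFormula n) : Prop :=
  ∀ v : MFormula n → Prop,
    ¬ v .bot → (∀ ψ χ : MFormula n, v (ψ.imp χ) ↔ (v ψ → v χ)) → v φ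

/-- Normal modal logics with `n` modalities. -/
structure IsNormalLogic {n : ℕ} (L : Set (MFormula n)) : Prop where
  taut : ∀ φ : MFormula n, IsTautology φ → φ ∈ L
  kax : ∀ (i : Fin n) (p q : MFormula n),
    ((MFormula.box i (p.imp q)).imp ((MFormula.box i p).imp (MFormula.box i q))) ∈ L
  mp : ∀ φ ψ : MFormula n, φ.imp ψ ∈ L → φ ∈ L → ψ ∈ L
  subst : ∀ (φ : MFormula n) (s : ℕ → MFormula n), φ ∈ L → φ.subst s ∈ L
  nec : ∀ (i : Fin n) (φ : MFormula n), φ ∈ L → MFormula.box i φ ∈ L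

/-- The smallest normal logic containing `Γ`. -/
def NormalClosure {n : ℕ} (Γ : Set (MFormula n)) : Set (MFormula n) :=
  ⋂₀ {L : Set (MFormula n) | IsNormalLogic L ∧ Γ ⊆ L}

/-- The axiom □p → ¬□¬p. -/
def dAx : MFormula 1 :=
  (MFormula.box 0 (.prop 0)).imp (MFormula.neg (MFormula.box 0 (MFormula.neg (.prop 0))))

/-- The axiom □p → p. -/
def tAx : MFormula 1 := (MFormula.box 0 (.prop 0)).imp (.prop 0)

/-- The axiom □p → □□p. -/
def fourAx : MFormula 1 :=
  (MFormula.box 0 (.prop 0)).imp (MFormula.box 0 (MFormula.box 0 (.prop 0)))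

def LogicK : Set (MFormula 1) := NormalClosure ∅
def LogicD : Set (MFormula 1) := NormalClosure (LogicK ∪ {dAx})
def LogicT : Set (MFormula 1) := NormalClosure (LogicK ∪ {tAx})
def LogicD4 : Set (MFormula 1) := NormalClosure (LogicD ∪ {fourAx})
def LogicS4 : Set (MFormula 1) := NormalClosure (LogicT ∪ {fourAx})

/-- Translation of a unimodal formula into the bimodal language, replacing □ by □_i. -/
def trTo (i : Fin 2) : MFormula 1 → MFormula 2
  | .prop p  => .prop p
  | .bot     => .bot
  | .imp φ ψ => .imp (trTo i φ) (trTo i ψ)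
  | .box _ φ => .box i (trTo i φ)

/-- The fusion `L₁ ⊗ L₂` of two unimodal logics: the smallest bimodal normal logic
containing the translation of `L₁` (□ ↦ □₁) and of `L₂` (□ ↦ □₂). -/
def Fusion (L₁ L₂ : Set (MFormula 1)) : Set (MFormula 2) :=
  NormalClosure (trTo 0 '' L₁ ∪ trTo 1 '' L₂)

/-- Truth in a Kripke model. -/
def kSat {n : ℕ} {W : Type} (R : Fin n → W → W → Prop) (V : ℕ → Set W) :
    W → MFormula n → Prop
  | w, .prop p  => w ∈ V p
  | _, .bot     => False
  | w, .imp φ ψ => kSat R V w φ → kSat R V w ψ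
  | w, .box i φ => ∀ v : W, R i w v → kSat R V v φ

/-- The logic of a Kripke `n`-frame. -/
def KLogn {n : ℕ} {W : Type} [Nonempty W] (R : Fin n → W → W → Prop) :
    Set (MFormula n) :=
  {φ | ∀ (V : ℕ → Set W) (w : W), kSat R V w φ}

/-- The logic of a unimodal Kripke frame. -/
def KLog {W : Type} [Nonempty W] (R : W → W → Prop) : Set (MFormula 1) :=
  KLogn (fun _ => R)

/-- The logic of a bimodal Kripke frame. -/
def KLog2 {W : Type} [Nonempty W] (R₁ R₂ : W → W → Prop) : Set (MFormula 2) :=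
  KLogn ![R₁, R₂]

/-- Truth in a (monotone) neighborhood model: `x ⊨ □_i φ` iff the truth set of `φ`
belongs to the filter `τ i x`. -/
def nSat {n : ℕ} {X : Type} (τ : Fin n → X → Filter X) (V : ℕ → Set X) :
    X → MFormula n → Prop
  | x, .prop p  => x ∈ V p
  | _, .bot     => False
  | x, .imp φ ψ => nSat τ V x φ → nSat τ V x ψ
  | x, .box i φ => {y | nSat τ V y φ} ∈ τ i x

/-- The logic of a neighborhood `n`-frame. -/
def NLogn {n : ℕ} {X : Type} [Nonempty X] (τ : Fin n → X → Filter X) :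
    Set (MFormula n) :=
  {φ | ∀ (V : ℕ → Set X) (x : X), nSat τ V x φ}

/-- The logic of a unimodal neighborhood frame. -/
def NLog {X : Type} [Nonempty X] (τ : X → Filter X) : Set (MFormula 1) :=
  NLogn (fun _ => τ)

/-- The logic of a neighborhood 2-frame. -/
def NLog2 {X : Type} [Nonempty X] (τ₁ τ₂ : X → Filter X) : Set (MFormula 2) :=
  NLogn ![τ₁, τ₂]

/-- Validity of a unimodal formula in a neighborhood frame. -/
def NValid {X : Type} (τ : X → Filter X) (φ : MFormula 1) : Prop :=
  ∀ (V : ℕ → Set X) (x : X), nSat (fun _ => τ) V x φ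

/-- The neighborhood frame `N(F)` of a Kripke frame `F = (W, R)`:
`τ(w)` is the principal filter of `R(w)`. -/
def nOfK {W : Type} (R : W → W → Prop) (w : W) : Filter W :=
  Filter.principal {v | R w v}

/-- Bounded morphisms between neighborhood frames (with neighborhood functions
indexed by `ι`). -/
def IsNdMorphism {ι X Y : Type} (τ : ι → X → Filter X) (σ : ι → Y → Filter Y)
    (f : X → Y) : Prop :=
  Function.Surjective f ∧
    ∀ (i : ι) (x : X),
      (∀ U ∈ τ i x, f '' U ∈ σ i (f x)) ∧
      (∀ V ∈ σ i (f x), ∃ U ∈ τ i x, f '' U ⊆ V)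

/-- First neighborhood function of the product of two neighborhood frames:
`U ∈ τ'_1(x₁,x₂)` iff `∃ V ∈ τ₁ x₁, V × {x₂} ⊆ U`. -/
def prodTau1 {X₁ X₂ : Type} (τ₁ : X₁ → Filter X₁) (p : X₁ × X₂) :
    Filter (X₁ × X₂) :=
  (τ₁ p.1).map (fun x => (x, p.2))

/-- Second neighborhood function of the product of two neighborhood frames:
`U ∈ τ'_2(x₁,x₂)` iff `∃ V ∈ τ₂ x₂, {x₁} × V ⊆ U`. -/
def prodTau2 {X₁ X₂ : Type} (τ₂ : X₂ → Filter X₂) (p : X₁ × X₂) :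
    Filter (X₁ × X₂) :=
  (τ₂ p.2).map (fun y => (p.1, y))

/-- The successor relation on finite sequences: `a R b` iff `b = a·x` for some `x ∈ A`. -/
def sucRel (A : Type) (a b : List A) : Prop := ∃ x : A, b = a ++ [x]

/-- The four kinds of tree frames: irreflexive/reflexive, non-transitive/transitive. -/
inductive TreeKind : Type
  | inn  -- irreflexive non-transitive: F_in
  | rn   -- reflexive non-transitive: F_rn (reflexive closure)
  | itr  -- irreflexive transitive: F_it (transitive closure)
  | rt   -- reflexive transitive: F_rt (reflexive-transitive closure)

/-- The relation of the tree frame `F_{ξη}[A]` on `A*`. -/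
def treeRel (A : Type) : TreeKind → List A → List A → Prop
  | .inn => sucRel A
  | .rn  => fun a b => a = b ∨ sucRel A a b
  | .itr => Relation.TransGen (sucRel A)
  | .rt  => Relation.ReflTransGen (sucRel A)

/-- First relation of the product frame `F₁ ⊗ F₂` on `(A ⊔ B)*`:
`x R'_1 y` iff `y = x·z` for some `z ∈ A*` with `Λ R₁ z`. -/
def prodRel1 (A B : Type) (k : TreeKind) (x y : List (A ⊕ B)) : Prop :=
  ∃ z : List A, treeRel A k [] z ∧ y = x ++ z.map Sum.inl

/-- Second relation of the product frame `F₁ ⊗ F₂` on `(A ⊔ B)*`. -/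
def prodRel2 (A B : Type) (k : TreeKind) (x y : List (A ⊕ B)) : Prop :=
  ∃ z : List B, treeRel B k [] z ∧ y = x ++ z.map Sum.inr

/-- Pseudo-infinite sequences over `A ∪ {0}` (with `0` modelled by `none`, so
automatically `0 ∉ A`) that are eventually `0`. -/
def PSeq (A : Type) : Type :=
  {α : ℕ → Option A // ∃ N, ∀ k ≥ N, α k = none}

instance {A : Type} : Nonempty (PSeq A) := ⟨⟨fun _ => none, 0, fun _ _ => rfl⟩⟩

/-- `st(α)`: the least `N` such that `α` has only zeros from position `N` on. -/
noncomputable def PSeq.st {A : Type} (α : PSeq A) : ℕ :=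
  sInf {N | ∀ k ≥ N, α.1 k = none}

/-- `f_F(α)`: the finite sequence obtained from `α` by deleting all zeros. -/
noncomputable def PSeq.forget {A : Type} (α : PSeq A) : List A :=
  ((List.range α.st).map α.1).reduceOption

/-- The basic neighborhood `U_k(α)` of `α`, relative to the relation `R` on `A*`:
`{β ∈ X : α|_m = β|_m and f_F(α) R f_F(β)}` where `m = max(k, st(α))`. -/
def Unbhd {A : Type} (R : List A → List A → Prop) (k : ℕ) (α : PSeq A) :
    Set (PSeq A) :=
  {β | (∀ i < max k α.st, α.1 i = β.1 i) ∧ R α.forget β.forget}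

/-- The neighborhood function of `N_ω(F)`: `τ(α)` is the filter generated by the
base `{U_k(α) : k ∈ ℕ}`. -/
noncomputable def nOmega {A : Type} (R : List A → List A → Prop) (α : PSeq A) :
    Filter (PSeq A) :=
  ⨅ k : ℕ, Filter.principal (Unbhd R k α)

/-- The interleaving `x₁ y₁ x₂ y₂ …` of two pseudo-infinite sequences. -/
def interleave {A B : Type} (α : PSeq A) (β : PSeq B) : PSeq (A ⊕ B) :=
  ⟨fun n => if n % 2 = 0 then (α.1 (n / 2)).map Sum.inl
            else (β.1 (n / 2)).map Sum.inr, by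
    obtain ⟨N₁, h₁⟩ := α.2
    obtain ⟨N₂, h₂⟩ := β.2
    refine ⟨2 * max N₁ N₂, fun k hk => ?_⟩
    have hdiv : max N₁ N₂ ≤ k / 2 := by omega
    by_cases h : k % 2 = 0
    · simp [h, h₁ (k / 2) (le_trans (le_max_left _ _) hdiv)]
    · simp [h, h₂ (k / 2) (le_trans (le_max_right _ _) hdiv)]⟩

/-- The map `g`: delete all zeros from the interleaving of `α` and `β`. -/
noncomputable def gMap {A B : Type} (p : PSeq A × PSeq B) : List (A ⊕ B) :=
  (interleave p.1 p.2).forget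
section Paper
open MFormula

abbrev MF := MFormula 1

/-- Iterated implication `φ₁ → (φ₂ → … → ψ)`. -/
def impList : List MF → MF → MF
  | [], ψ => ψ
  | φ :: l, ψ => φ.imp (impList l ψ)

section Sem
variable (v : MF → Prop)

lemma sem_neg (himp : ∀ ψ χ : MF, v (ψ.imp χ) ↔ (v ψ → v χ)) (hbot : ¬ v .bot) (φ : MF) :
    v φ.neg ↔ ¬ v φ := by
  rw [MFormula.neg, himp]; tauto

lemma sem_impList (himp : ∀ ψ χ : MF, v (ψ.imp χ) ↔ (v ψ → v χ)) (l : List MF) (ψ : MF) :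
    v (impList l ψ) ↔ ((∀ x ∈ l, v x) → v ψ) := by
  induction l with
  | nil => simp [impList]
  | cons a t ih =>
    rw [impList, himp, ih]
    simp only [List.mem_cons]
    constructor
    · intro h hall; exact h (hall a (Or.inl rfl)) fun x hx => hall x (Or.inr hx)
    · intro h ha hall; exact h fun x hx => hx.elim (fun e => e ▸ ha) (hall x)

end Sem

section Normal

lemma impList_mono {L : Set MF} (hL : IsNormalLogic L) {l l' : List MF} {ψ : MF} (hsub : ∀ x ∈ l, x ∈ l')
    (hd : impList l ψ ∈ L) : impList l' ψ ∈ L := by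
  refine hL.mp _ _ (hL.taut _ ?_) hd
  intro v hbot himp
  rw [himp, sem_impList v himp, sem_impList v himp]
  intro h1 h2
  exact h1 fun x hx => h2 x (hsub x hx)

lemma box_impList {L : Set MF} (hL : IsNormalLogic L) (l : List MF) (ψ : MF) :
    (MFormula.box 0 (impList l ψ)).imp
      (impList (l.map (MFormula.box 0)) (MFormula.box 0 ψ)) ∈ L := by
  induction l generalizing ψ with
  | nil =>
    refine hL.taut _ ?_
    intro v hbot himp; rw [himp]; exact id
  | cons a t ih =>
    have k := hL.kax 0 a (impList t ψ)
    have iht := ih ψ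
    -- compose: (P → (Q → R)) and (R → S) give (P → (Q → S))
    have comp : ∀ P Q R S : MF,
        (P.imp (Q.imp R)).imp ((R.imp S).imp (P.imp (Q.imp S))) ∈ L := by
      intro P Q R S
      refine hL.taut _ ?_
      intro v hbot himp
      simp only [himp]; tauto
    exact hL.mp _ _ (hL.mp _ _ (comp _ _ _ _) k) iht

lemma nec_impList {L : Set MF} (hL : IsNormalLogic L) {l : List MF} {ψ : MF} (h : impList l ψ ∈ L) :
    impList (l.map (MFormula.box 0)) (MFormula.box 0 ψ) ∈ L :=
  hL.mp _ _ (box_impList hL l ψ) (hL.nec 0 _ h)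

end Normal

/-- Γ is L-inconsistent. -/
def LIncon (L Γ : Set MF) : Prop :=
  ∃ l : List MF, (∀ x ∈ l, x ∈ Γ) ∧ impList l .bot ∈ L

def LCon (L Γ : Set MF) : Prop := ¬ LIncon L Γ

lemma LCon.mono {L Γ Δ : Set MF} (h : LCon L Δ) (hsub : Γ ⊆ Δ) : LCon L Γ := by
  intro ⟨l, hl, hd⟩; exact h ⟨l, fun x hx => hsub (hl x hx), hd⟩

structure IsMCS (L w : Set MF) : Prop where
  con : LCon L w
  max : ∀ φ : MF, φ ∈ w ∨ φ.neg ∈ w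

section MCS
variable {L w : Set MF}

lemma mcs_not_both (hL : IsNormalLogic L) (hw : IsMCS L w) {φ : MF} (h1 : φ ∈ w) (h2 : φ.neg ∈ w) : False := by
  refine hw.con ⟨[φ, φ.neg], ?_, ?_⟩
  · intro x hx
    simp only [List.mem_cons, List.not_mem_nil, or_false] at hx
    rcases hx with rfl | rfl; exacts [h1, h2]
  · refine hL.taut _ ?_
    intro v hbot himp
    show v (φ.imp (φ.neg.imp .bot))
    simp only [MFormula.neg, himp]; tauto

lemma mcs_L_sub (hL : IsNormalLogic L) (hw : IsMCS L w) : L ⊆ w := by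
  intro φ hφ
  rcases hw.max φ with h | h
  · exact h
  · exfalso
    refine hw.con ⟨[φ.neg], by simp [h], ?_⟩
    have taut : IsTautology (φ.imp (φ.neg.imp .bot)) := by
      intro v hbot himp; simp only [MFormula.neg, himp]; tauto
    exact hL.mp _ _ (hL.taut _ taut) hφ

lemma mcs_mp (hL : IsNormalLogic L) (hw : IsMCS L w) {φ ψ : MF} (h1 : φ.imp ψ ∈ w) (h2 : φ ∈ w) : ψ ∈ w := by
  rcases hw.max ψ with h | h
  · exact h
  · exfalso
    refine hw.con ⟨[φ.imp ψ, φ, ψ.neg], ?_, ?_⟩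
    · intro x hx
      simp only [List.mem_cons, List.not_mem_nil, or_false] at hx
      rcases hx with rfl | rfl | rfl; exacts [h1, h2, h]
    · refine hL.taut _ ?_
      intro v hbot himp
      show v ((φ.imp ψ).imp (φ.imp (ψ.neg.imp .bot)))
      simp only [MFormula.neg, himp]; tauto

lemma mcs_bot_not_mem (hL : IsNormalLogic L) (hw : IsMCS L w) : MFormula.bot ∉ w := by
  intro h
  refine hw.con ⟨[.bot], by simp [h], ?_⟩
  refine hL.taut _ ?_
  intro v hbot himp
  show v (MFormula.bot.imp .bot)
  rw [himp]; exact id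

lemma mcs_imp_iff (hL : IsNormalLogic L) (hw : IsMCS L w) {φ ψ : MF} : φ.imp ψ ∈ w ↔ (φ ∈ w → ψ ∈ w) := by
  constructor
  · exact fun h1 h2 => mcs_mp hL hw h1 h2
  · intro h
    rcases hw.max φ with hφ | hφ
    · have hψ := h hφ
      rcases hw.max (φ.imp ψ) with h' | h'
      · exact h'
      · exfalso
        refine hw.con ⟨[ψ, (φ.imp ψ).neg], ?_, ?_⟩
        · intro x hx
          simp only [List.mem_cons, List.not_mem_nil, or_false] at hx
          rcases hx with rfl | rfl; exacts [hψ, h']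
        · refine hL.taut _ ?_
          intro v hbot himp
          show v (ψ.imp (((φ.imp ψ).imp .bot).imp .bot))
          simp only [himp]; tauto
    · rcases hw.max (φ.imp ψ) with h' | h'
      · exact h'
      · exfalso
        refine hw.con ⟨[φ.neg, (φ.imp ψ).neg], ?_, ?_⟩
        · intro x hx
          simp only [List.mem_cons, List.not_mem_nil, or_false] at hx
          rcases hx with rfl | rfl; exacts [hφ, h']
        · refine hL.taut _ ?_
          intro v hbot himp
          show v ((φ.imp .bot).imp (((φ.imp ψ).imp .bot).imp .bot))
          simp only [himp]; tauto

lemma mcs_impList_mp (hL : IsNormalLogic L) (hw : IsMCS L w) {l : List MF} {ψ : MF} (hall : ∀ x ∈ l, x ∈ w)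
    (h : impList l ψ ∈ w) : ψ ∈ w := by
  induction l with
  | nil => exact h
  | cons a t ih =>
    exact ih (fun x hx => hall x (List.mem_cons_of_mem a hx))
      (mcs_mp hL hw h (hall a List.mem_cons_self))

end MCS
end Paper
/-- An injective encoding of unimodal formulas into `ℕ`. -/
def mfEnc : MF → ℕ
  | .prop p => Nat.pair 0 p
  | .bot => Nat.pair 1 0
  | .imp a b => Nat.pair 2 (Nat.pair (mfEnc a) (mfEnc b))
  | .box _ a => Nat.pair 3 (mfEnc a)

lemma mfEnc_inj : Function.Injective mfEnc := by
  intro a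
  induction a with
  | prop p => intro b hb; cases b <;> simp [mfEnc, Nat.pair_eq_pair] at hb ⊢; omega
  | bot => intro b hb; cases b <;> simp [mfEnc, Nat.pair_eq_pair] at hb ⊢
  | imp x y ihx ihy =>
    intro b hb; cases b <;> simp [mfEnc, Nat.pair_eq_pair] at hb ⊢
    exact ⟨ihx hb.1, ihy hb.2⟩
  | box i x ihx =>
    intro b hb
    cases b with
    | prop _ | bot | imp _ _ => simp [mfEnc, Nat.pair_eq_pair] at hb
    | box j y =>
      simp [mfEnc, Nat.pair_eq_pair] at hb
      rw [ihx hb, Subsingleton.elim i j]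

instance : Nonempty MF := ⟨.bot⟩

noncomputable def mfEnum : ℕ → MF := Function.invFun mfEnc

lemma mfEnum_surj : Function.Surjective mfEnum :=
  Function.invFun_surjective mfEnc_inj

open Classical in
/-- Lindenbaum chain. -/
noncomputable def lchain (L Γ : Set MF) : ℕ → Set MF
  | 0 => Γ
  | n + 1 =>
    if LCon L (insert (mfEnum n) (lchain L Γ n)) then insert (mfEnum n) (lchain L Γ n)
    else insert (mfEnum n).neg (lchain L Γ n)

lemma lcon_insert {L Γ : Set MF} (hL : IsNormalLogic L) (hc : LCon L Γ) (φ : MF) :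
    LCon L (insert φ Γ) ∨ LCon L (insert φ.neg Γ) := by
  by_contra h
  push_neg at h
  obtain ⟨h1, h2⟩ := h
  rw [LCon, not_not] at h1 h2
  obtain ⟨l1, hl1, hd1⟩ := h1
  obtain ⟨l2, hl2, hd2⟩ := h2
  classical
  set l1' := l1.filter (fun x => decide (x ∈ Γ)) with hl1'def
  set l2' := l2.filter (fun x => decide (x ∈ Γ)) with hl2'def
  have m1 : impList (φ :: l1') .bot ∈ L := by
    refine impList_mono hL ?_ hd1
    intro x hx
    rcases hl1 x hx with h | h
    · exact h ▸ List.mem_cons_self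
    · exact List.mem_cons_of_mem _ (List.mem_filter.mpr ⟨hx, by simpa using h⟩)
  have m2 : impList (φ.neg :: l2') .bot ∈ L := by
    refine impList_mono hL ?_ hd2
    intro x hx
    rcases hl2 x hx with h | h
    · exact h ▸ List.mem_cons_self
    · exact List.mem_cons_of_mem _ (List.mem_filter.mpr ⟨hx, by simpa using h⟩)
  refine hc ⟨l1' ++ l2', ?_, ?_⟩
  · intro x hx
    rcases List.mem_append.mp hx with h | h
    · exact of_decide_eq_true (List.mem_filter.mp h).2
    · exact of_decide_eq_true (List.mem_filter.mp h).2
  · have taut : IsTautology ((impList (φ :: l1') .bot).imp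
        ((impList (φ.neg :: l2') .bot).imp (impList (l1' ++ l2') .bot))) := by
      intro v hbot himp
      simp only [himp]
      intro a b
      rw [sem_impList v himp] at a b ⊢
      simp only [List.mem_cons, List.mem_append] at a b ⊢
      intro hall
      by_cases hφ : v φ
      · exact a fun x hx => hx.elim (fun e => e ▸ hφ) (fun h => hall x (Or.inl h))
      · refine b fun x hx => ?_
        rcases hx with rfl | h
        · rw [sem_neg v himp hbot]; exact hφ
        · exact hall x (Or.inr h)
    exact hL.mp _ _ (hL.mp _ _ (hL.taut _ taut) m1) m2

lemma lchain_con {L Γ : Set MF} (hL : IsNormalLogic L) (hc : LCon L Γ) :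
    ∀ n, LCon L (lchain L Γ n) := by
  intro n
  induction n with
  | zero => exact hc
  | succ n ih =>
    rw [lchain]
    split
    · assumption
    · rcases lcon_insert hL ih (mfEnum n) with h | h
      · contradiction
      · exact h

lemma lchain_mono {L Γ : Set MF} {m n : ℕ} (h : m ≤ n) : lchain L Γ m ⊆ lchain L Γ n := by
  induction n with
  | zero => simp_all
  | succ n ih =>
    rcases Nat.lt_or_ge m (n+1) with h' | h'
    · refine (ih (by omega)).trans ?_
      rw [lchain]; split <;> exact Set.subset_insert _ _
    · have : m = n + 1 := by omega
      subst this; rfl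

lemma lindenbaum {L Γ : Set MF} (hL : IsNormalLogic L) (hc : LCon L Γ) :
    ∃ w, Γ ⊆ w ∧ IsMCS L w := by
  refine ⟨⋃ n, lchain L Γ n, Set.subset_iUnion (lchain L Γ) 0, ?_, ?_⟩
  · rintro ⟨l, hl, hd⟩
    -- find a single stage containing l
    have : ∃ n, ∀ x ∈ l, x ∈ lchain L Γ n := by
      clear hd
      induction l with
      | nil => exact ⟨0, by simp⟩
      | cons a t ih =>
        obtain ⟨n, hn⟩ := ih fun x hx => hl x (List.mem_cons_of_mem _ hx)
        obtain ⟨m, hm⟩ := Set.mem_iUnion.mp (hl a List.mem_cons_self)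
        refine ⟨max n m, fun x hx => ?_⟩
        rcases List.mem_cons.mp hx with rfl | hx
        · exact lchain_mono (le_max_right n m) hm
        · exact lchain_mono (le_max_left n m) (hn x hx)
    obtain ⟨n, hn⟩ := this
    exact lchain_con hL hc n ⟨l, hn, hd⟩
  · intro φ
    obtain ⟨n, rfl⟩ := mfEnum_surj φ
    by_cases h : LCon L (insert (mfEnum n) (lchain L Γ n))
    · refine Or.inl (Set.mem_iUnion.mpr ⟨n + 1, ?_⟩)
      rw [lchain, if_pos h]; exact Set.mem_insert _ _
    · refine Or.inr (Set.mem_iUnion.mpr ⟨n + 1, ?_⟩)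
      rw [lchain, if_neg h]; exact Set.mem_insert _ _

/-- The set `{χ | □χ ∈ w}`. -/
def boxInv (w : Set MF) : Set MF := {χ | MFormula.box 0 χ ∈ w}

/-- Existence lemma: if `□ψ ∉ w` then `boxInv w ∪ {¬ψ}` is consistent. -/
lemma existence_con {L w : Set MF} (hL : IsNormalLogic L) (hw : IsMCS L w) {ψ : MF}
    (h : MFormula.box 0 ψ ∉ w) : LCon L (insert ψ.neg (boxInv w)) := by
  rintro ⟨l, hl, hd⟩
  classical
  set l' := l.filter (fun x => decide (x ∈ boxInv w)) with hl'def
  have m1 : impList (ψ.neg :: l') .bot ∈ L := by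
    refine impList_mono hL ?_ hd
    intro x hx
    rcases hl x hx with h' | h'
    · exact h' ▸ List.mem_cons_self
    · exact List.mem_cons_of_mem _ (List.mem_filter.mpr ⟨hx, by simpa using h'⟩)
  have m2 : impList l' ψ ∈ L := by
    have taut : IsTautology ((impList (ψ.neg :: l') .bot).imp (impList l' ψ)) := by
      intro v hbot himp
      rw [himp, sem_impList v himp, sem_impList v himp]
      intro a hall
      by_contra hψ
      refine hbot (a ?_)
      intro x hx
      rcases List.mem_cons.mp hx with rfl | hx
      · rw [sem_neg v himp hbot]; exact hψ
      · exact hall x hx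
    exact hL.mp _ _ (hL.taut _ taut) m1
  have m3 : impList (l'.map (MFormula.box 0)) (MFormula.box 0 ψ) ∈ L := nec_impList hL m2
  have m4 : MFormula.box 0 ψ ∈ w := by
    refine mcs_impList_mp hL hw ?_ (mcs_L_sub hL hw m3)
    intro x hx
    obtain ⟨χ, hχ, rfl⟩ := List.mem_map.mp hx
    exact of_decide_eq_true (List.mem_filter.mp hχ).2
  exact h m4
lemma step_exists {L : Set MF} (hL : IsNormalLogic L)
    (hser : ∀ w, IsMCS L w → LCon L (boxInv w)) {w : Set MF} (hw : IsMCS L w) (ψ : MF) :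
    ∃ v, IsMCS L v ∧ boxInv w ⊆ v ∧ (MFormula.box 0 ψ ∉ w → ψ.neg ∈ v) := by
  by_cases h : MFormula.box 0 ψ ∈ w
  · obtain ⟨v, hsub, hv⟩ := lindenbaum hL (hser w hw)
    exact ⟨v, hv, hsub, fun h' => absurd h h'⟩
  · obtain ⟨v, hsub, hv⟩ := lindenbaum hL (existence_con hL hw h)
    exact ⟨v, hv, fun χ hχ => hsub (Set.mem_insert_of_mem _ hχ),
      fun _ => hsub (Set.mem_insert _ _)⟩

/-- The canonical tree of MCSs, indexed by *reversed* lists. -/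
noncomputable def treeW {L : Set MF} (hL : IsNormalLogic L)
    (hser : ∀ w, IsMCS L w → LCon L (boxInv w)) {A : Type} (eA : A → MF)
    (w0 : {w : Set MF // IsMCS L w}) : List A → {w : Set MF // IsMCS L w}
  | [] => w0
  | x :: t =>
    ⟨Classical.choose (step_exists hL hser (treeW hL hser eA w0 t).2 (eA x)),
      (Classical.choose_spec (step_exists hL hser (treeW hL hser eA w0 t).2 (eA x))).1⟩

lemma treeW_boxInv {L : Set MF} (hL : IsNormalLogic L)
    (hser : ∀ w, IsMCS L w → LCon L (boxInv w)) {A : Type} (eA : A → MF)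
    (w0 : {w : Set MF // IsMCS L w}) (t : List A) (x : A) :
    boxInv (treeW hL hser eA w0 t).1 ⊆ (treeW hL hser eA w0 (x :: t)).1 :=
  (Classical.choose_spec (step_exists hL hser (treeW hL hser eA w0 t).2 (eA x))).2.1

lemma treeW_neg {L : Set MF} (hL : IsNormalLogic L)
    (hser : ∀ w, IsMCS L w → LCon L (boxInv w)) {A : Type} (eA : A → MF)
    (w0 : {w : Set MF // IsMCS L w}) (t : List A) (x : A)
    (h : MFormula.box 0 (eA x) ∉ (treeW hL hser eA w0 t).1) :
    (eA x).neg ∈ (treeW hL hser eA w0 (x :: t)).1 :=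
  (Classical.choose_spec (step_exists hL hser (treeW hL hser eA w0 t).2 (eA x))).2.2 h

section Canonical
variable {L : Set MF} (hL : IsNormalLogic L)
    (hser : ∀ w, IsMCS L w → LCon L (boxInv w)) {A : Type} (eA : A → MF)
    (w0 : {w : Set MF // IsMCS L w})

/-- The canonical tree model on `A*`. -/
noncomputable def fW (a : List A) : Set MF := (treeW hL hser eA w0 a.reverse).1

lemma fW_mcs (a : List A) : IsMCS L (fW hL hser eA w0 a) :=
  (treeW hL hser eA w0 a.reverse).2

lemma fW_suc {a b : List A} (h : sucRel A a b) :
    boxInv (fW hL hser eA w0 a) ⊆ fW hL hser eA w0 b := by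
  obtain ⟨x, rfl⟩ := h
  have e : (a ++ [x]).reverse = x :: a.reverse := by simp
  show boxInv (treeW hL hser eA w0 a.reverse).1 ⊆ (treeW hL hser eA w0 (a ++ [x]).reverse).1
  rw [e]
  exact treeW_boxInv hL hser eA w0 a.reverse x

lemma fW_neg {a : List A} {x : A} (h : MFormula.box 0 (eA x) ∉ fW hL hser eA w0 a) :
    (eA x).neg ∈ fW hL hser eA w0 (a ++ [x]) := by
  have e : (a ++ [x]).reverse = x :: a.reverse := by simp
  show (eA x).neg ∈ (treeW hL hser eA w0 (a ++ [x]).reverse).1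
  rw [e]
  exact treeW_neg hL hser eA w0 a.reverse x h

lemma fW_box_trans (h4 : ∀ φ : MF, (MFormula.box 0 φ).imp (MFormula.box 0 (MFormula.box 0 φ)) ∈ L)
    {a b : List A} (h : Relation.TransGen (sucRel A) a b) {ψ : MF}
    (hψ : MFormula.box 0 ψ ∈ fW hL hser eA w0 a) :
    ψ ∈ fW hL hser eA w0 b ∧ MFormula.box 0 ψ ∈ fW hL hser eA w0 b := by
  induction h with
  | single h =>
    refine ⟨fW_suc hL hser eA w0 h hψ, ?_⟩
    have hbb : MFormula.box 0 (MFormula.box 0 ψ) ∈ fW hL hser eA w0 a :=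
      mcs_mp hL (fW_mcs hL hser eA w0 a) (mcs_L_sub hL (fW_mcs hL hser eA w0 a) (h4 ψ)) hψ
    exact fW_suc hL hser eA w0 h hbb
  | tail h1 h2 ih =>
    obtain ⟨_, hbox⟩ := ih
    have hbb : MFormula.box 0 (MFormula.box 0 ψ) ∈ _ :=
      mcs_mp hL (fW_mcs hL hser eA w0 _) (mcs_L_sub hL (fW_mcs hL hser eA w0 _) (h4 ψ)) hbox
    exact ⟨fW_suc hL hser eA w0 h2 hbox, fW_suc hL hser eA w0 h2 hbb⟩

lemma fW_box_refltrans
    (h4 : ∀ φ : MF, (MFormula.box 0 φ).imp (MFormula.box 0 (MFormula.box 0 φ)) ∈ L)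
    {a b : List A} (h : Relation.ReflTransGen (sucRel A) a b) {ψ : MF}
    (hψ : MFormula.box 0 ψ ∈ fW hL hser eA w0 a) :
    MFormula.box 0 ψ ∈ fW hL hser eA w0 b := by
  induction h with
  | refl => exact hψ
  | tail h1 h2 ih =>
    have hbb : MFormula.box 0 (MFormula.box 0 ψ) ∈ _ :=
      mcs_mp hL (fW_mcs hL hser eA w0 _) (mcs_L_sub hL (fW_mcs hL hser eA w0 _) (h4 ψ)) ih
    exact fW_suc hL hser eA w0 h2 hbb

lemma sucRel_treeRel (k : TreeKind) {a : List A} (x : A) :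
    treeRel A k a (a ++ [x]) := by
  have h : sucRel A a (a ++ [x]) := ⟨x, rfl⟩
  cases k with
  | inn => exact h
  | rn => exact Or.inr h
  | itr => exact Relation.TransGen.single h
  | rt => exact Relation.ReflTransGen.single h

/-- Truth lemma for the canonical tree model. -/
lemma truth_lemma (heA : Function.Surjective eA) (k : TreeKind)
    (hT : (k = .rn ∨ k = .rt) → ∀ φ : MF, (MFormula.box 0 φ).imp φ ∈ L)
    (h4 : (k = .itr ∨ k = .rt) →
      ∀ φ : MF, (MFormula.box 0 φ).imp (MFormula.box 0 (MFormula.box 0 φ)) ∈ L)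
    (φ : MF) :
    ∀ a : List A,
      kSat (fun _ : Fin 1 => treeRel A k) (fun p => {a | MFormula.prop p ∈ fW hL hser eA w0 a}) a φ
        ↔ φ ∈ fW hL hser eA w0 a := by
  induction φ with
  | prop p => intro a; exact Iff.rfl
  | bot => intro a; exact ⟨fun h => h.elim, fun h => mcs_bot_not_mem hL (fW_mcs hL hser eA w0 a) h⟩
  | imp φ ψ ihφ ihψ =>
    intro a
    show (kSat _ _ a φ → kSat _ _ a ψ) ↔ _
    rw [ihφ a, ihψ a, mcs_imp_iff hL (fW_mcs hL hser eA w0 a)]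
  | box i φ ih =>
    intro a
    have hi : i = 0 := Subsingleton.elim i 0
    subst hi
    show (∀ b, treeRel A k a b → kSat _ _ b φ) ↔ _
    constructor
    · intro hall
      by_contra hbox
      obtain ⟨x, rfl⟩ := heA φ
      have hneg := fW_neg hL hser eA w0 (a := a) (x := x) hbox
      have hmem : (eA x) ∈ fW hL hser eA w0 (a ++ [x]) :=
        (ih (a ++ [x])).mp (hall _ (sucRel_treeRel k x))
      exact mcs_not_both hL (fW_mcs hL hser eA w0 (a ++ [x])) hmem hneg
    · intro hbox b hrel
      rw [ih b]
      cases k with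
      | inn => exact fW_suc hL hser eA w0 hrel hbox
      | rn =>
        rcases hrel with rfl | hrel
        · exact mcs_mp hL (fW_mcs hL hser eA w0 _)
            (mcs_L_sub hL (fW_mcs hL hser eA w0 _) (hT (Or.inl rfl) φ)) hbox
        · exact fW_suc hL hser eA w0 hrel hbox
      | itr => exact (fW_box_trans hL hser eA w0 (h4 (Or.inl rfl)) hrel hbox).1
      | rt =>
        have := fW_box_refltrans hL hser eA w0 (h4 (Or.inr rfl)) hrel hbox
        exact mcs_mp hL (fW_mcs hL hser eA w0 b)
          (mcs_L_sub hL (fW_mcs hL hser eA w0 b) (hT (Or.inr rfl) φ)) this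

end Canonical

theorem kripke_complete {A : Type} [Countable A] [Infinite A] (k : TreeKind) {L : Set MF}
    (hL : IsNormalLogic L)
    (hser : ∀ w, IsMCS L w → LCon L (boxInv w))
    (hT : (k = .rn ∨ k = .rt) → ∀ φ : MF, (MFormula.box 0 φ).imp φ ∈ L)
    (h4 : (k = .itr ∨ k = .rt) →
      ∀ φ : MF, (MFormula.box 0 φ).imp (MFormula.box 0 (MFormula.box 0 φ)) ∈ L) :
    KLog (treeRel A k) ⊆ L := by
  intro φ0 hφ0
  by_contra hnot
  -- {¬φ0} is consistent
  have hcon : LCon L {φ0.neg} := by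
    rintro ⟨l, hl, hd⟩
    have m1 : impList [φ0.neg] .bot ∈ L := by
      refine impList_mono hL ?_ hd
      intro x hx
      have := hl x hx
      simp only [Set.mem_singleton_iff] at this
      simp [this]
    have taut : IsTautology ((impList [φ0.neg] .bot).imp φ0) := by
      intro v hbot himp
      rw [himp]
      show v ((φ0.imp .bot).imp .bot) → v φ0
      simp only [himp]; tauto
    exact hnot (hL.mp _ _ (hL.taut _ taut) m1)
  obtain ⟨w, hsub, hw⟩ := lindenbaum hL hcon
  obtain ⟨eqvA⟩ := nonempty_denumerable A
  have heA : Function.Surjective (fun x : A => mfEnum (Denumerable.eqv A x)) :=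
    mfEnum_surj.comp (Denumerable.eqv A).surjective
  set eA := fun x : A => mfEnum (Denumerable.eqv A x)
  have := truth_lemma hL hser eA ⟨w, hw⟩ heA k hT h4 φ0 []
  have hsat := hφ0 (fun p => {a | MFormula.prop p ∈ fW hL hser eA ⟨w, hw⟩ a}) []
  rw [this] at hsat
  have hroot : fW hL hser eA ⟨w, hw⟩ ([] : List A) = w := rfl
  rw [hroot] at hsat
  exact mcs_not_both hL hw hsat (hsub rfl)
lemma PSeq.st_spec {A : Type} (α : PSeq A) : ∀ k ≥ α.st, α.1 k = none :=
  Nat.sInf_mem (s := {N | ∀ k ≥ N, α.1 k = none}) α.2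

lemma PSeq.st_le {A : Type} (α : PSeq A) {N : ℕ} (h : ∀ k ≥ N, α.1 k = none) :
    α.st ≤ N := Nat.sInf_le h

lemma forget_eq {A : Type} (α : PSeq A) {m : ℕ} (hm : α.st ≤ m) :
    α.forget = ((List.range m).map α.1).reduceOption := by
  induction m, hm using Nat.le_induction with
  | base => rfl
  | succ n hn ih =>
    rw [List.range_succ, List.map_append, List.reduceOption_append, ih]
    have : α.1 n = none := α.st_spec n hn
    simp [this]

/-- Extend `α` by the letters of `z` starting at position `m`. -/
def pext {A : Type} (α : PSeq A) (m : ℕ) (z : List A) : PSeq A :=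
  ⟨fun i => if i < m then α.1 i else z[i - m]?,
    ⟨m + z.length, fun k hk => by
      have h1 : ¬ k < m := by omega
      simp only [h1, if_false]
      exact List.getElem?_eq_none (by omega)⟩⟩

lemma pext_agree {A : Type} (α : PSeq A) (m : ℕ) (z : List A) {i : ℕ} (hi : i < m) :
    α.1 i = (pext α m z).1 i := by simp [pext, hi]

lemma reduceOption_map_some' {A : Type} (z : List A) : (z.map some).reduceOption = z := by
  induction z with
  | nil => rfl
  | cons a t ih => rw [List.map_cons, List.reduceOption_cons_of_some, ih]

lemma range_getElem? {A : Type} (z : List A) :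
    (List.range z.length).map (fun j => z[j]?) = z.map some := by
  induction z with
  | nil => rfl
  | cons a t ih =>
    rw [List.length_cons, List.range_succ_eq_map, List.map_cons, List.map_map, List.map_cons]
    congr 1

lemma pext_forget {A : Type} (α : PSeq A) {m : ℕ} (z : List A) (hm : α.st ≤ m) :
    (pext α m z).forget = α.forget ++ z := by
  have hst : (pext α m z).st ≤ m + z.length := by
    apply PSeq.st_le
    intro k hk
    have h1 : ¬ k < m := by omega
    simp only [pext, h1, if_false]
    exact List.getElem?_eq_none (by omega)
  rw [forget_eq _ hst, List.range_add, List.map_append, List.reduceOption_append]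
  congr 1
  · rw [forget_eq α hm]
    congr 1
    apply List.map_congr_left
    intro i hi
    exact (pext_agree α m z (List.mem_range.mp hi)).symm
  · have he : List.map ((pext α m z).1 ∘ fun x => m + x) (List.range z.length)
        = z.map some := by
      rw [← range_getElem? z]
      apply List.map_congr_left
      intro j hj
      show (pext α m z).1 (m + j) = z[j]?
      have h1 : ¬ m + j < m := by omega
      simp only [pext, h1, if_false]
      congr 1
      omega
    rw [List.map_map, he, reduceOption_map_some']

/-- The all-zeros sequence. -/
def pzero (A : Type) : PSeq A := ⟨fun _ => none, 0, fun _ _ => rfl⟩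

lemma pzero_forget (A : Type) : (pzero A).forget = [] := by
  have h : (pzero A).st ≤ 0 := PSeq.st_le _ (fun _ _ => rfl)
  rw [forget_eq _ h]
  rfl

lemma rtg_append {A : Type} (a z : List A) :
    Relation.ReflTransGen (sucRel A) a (a ++ z) := by
  induction z generalizing a with
  | nil => simpa using Relation.ReflTransGen.refl
  | cons x t ih =>
    refine Relation.ReflTransGen.head ⟨x, rfl⟩ ?_
    have := ih (a ++ [x])
    rwa [List.append_assoc] at this

lemma tg_append {A : Type} (a : List A) {z : List A} (hz : z ≠ []) :
    Relation.TransGen (sucRel A) a (a ++ z) := by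
  match z, hz with
  | x :: t, _ =>
    refine Relation.TransGen.head' ⟨x, rfl⟩ ?_
    have := rtg_append (a ++ [x]) t
    rwa [List.append_assoc] at this

lemma tg_iff {A : Type} {a b : List A} :
    Relation.TransGen (sucRel A) a b ↔ ∃ z : List A, z ≠ [] ∧ b = a ++ z := by
  constructor
  · intro h
    induction h with
    | single h => obtain ⟨x, rfl⟩ := h; exact ⟨[x], by simp⟩
    | tail h1 h2 ih =>
      obtain ⟨z, hz, rfl⟩ := ih
      obtain ⟨x, rfl⟩ := h2
      exact ⟨z ++ [x], by simp, by rw [List.append_assoc]⟩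
  · rintro ⟨z, hz, rfl⟩; exact tg_append a hz

lemma rtg_iff {A : Type} {a b : List A} :
    Relation.ReflTransGen (sucRel A) a b ↔ ∃ z : List A, b = a ++ z := by
  constructor
  · intro h
    induction h with
    | refl => exact ⟨[], by simp⟩
    | tail h1 h2 ih =>
      obtain ⟨z, rfl⟩ := ih
      obtain ⟨x, rfl⟩ := h2
      exact ⟨z ++ [x], by rw [List.append_assoc]⟩
  · rintro ⟨z, rfl⟩; exact rtg_append a z

lemma unbhd_antitone {A : Type} (R : List A → List A → Prop) (α : PSeq A) {k k' : ℕ}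
    (h : k ≤ k') : Unbhd R k' α ⊆ Unbhd R k α := by
  rintro β ⟨h1, h2⟩
  exact ⟨fun i hi => h1 i (by omega), h2⟩

lemma mem_nOmega {A : Type} {R : List A → List A → Prop} {α : PSeq A} {S : Set (PSeq A)} :
    S ∈ nOmega R α ↔ ∃ k, Unbhd R k α ⊆ S := by
  rw [nOmega, Filter.mem_iInf_of_directed]
  · simp [Filter.mem_principal]
  · intro i j
    exact ⟨max i j, Filter.principal_mono.mpr (unbhd_antitone R α (le_max_left i j)),
      Filter.principal_mono.mpr (unbhd_antitone R α (le_max_right i j))⟩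

lemma treeRel_append {A : Type} (k : TreeKind) (α : PSeq A) {b : List A}
    (h : treeRel A k α.forget b) : ∃ z : List A, b = α.forget ++ z := by
  cases k with
  | inn => obtain ⟨x, rfl⟩ := h; exact ⟨[x], rfl⟩
  | rn =>
    rcases h with rfl | ⟨x, rfl⟩
    · exact ⟨[], by simp⟩
    · exact ⟨[x], rfl⟩
  | itr => obtain ⟨z, _, rfl⟩ := tg_iff.mp h; exact ⟨z, rfl⟩
  | rt => exact rtg_iff.mp h

lemma cover {A : Type} (k : TreeKind) (α : PSeq A) (n : ℕ) {b : List A}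
    (h : treeRel A k α.forget b) :
    ∃ β ∈ Unbhd (treeRel A k) n α, β.forget = b := by
  obtain ⟨z, rfl⟩ := treeRel_append k α h
  set m := max n α.st with hm
  refine ⟨pext α m z, ⟨?_, ?_⟩, ?_⟩
  · intro i hi
    exact pext_agree α m z hi
  · rw [pext_forget α z (le_max_right n α.st)]; exact h
  · rw [pext_forget α z (le_max_right n α.st)]

lemma unbhd_nonempty {A : Type} [Infinite A] (k : TreeKind) (α : PSeq A) (n : ℕ) :
    (Unbhd (treeRel A k) n α).Nonempty := by
  obtain ⟨a⟩ : Nonempty A := inferInstance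
  have h : treeRel A k α.forget (α.forget ++ [a]) := sucRel_treeRel k a
  obtain ⟨β, hβ, _⟩ := cover k α n h
  exact ⟨β, hβ⟩

/-- Transfer between the neighborhood frame and the Kripke frame via `forget`. -/
lemma nsat_ksat {A : Type} (k : TreeKind) (V : ℕ → Set (List A)) (φ : MF) :
    ∀ α : PSeq A,
      nSat (fun _ : Fin 1 => nOmega (treeRel A k)) (fun p => PSeq.forget ⁻¹' V p) α φ ↔
      kSat (fun _ : Fin 1 => treeRel A k) V α.forget φ := by
  induction φ with
  | prop p => intro α; exact Iff.rfl
  | bot => intro α; exact Iff.rfl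
  | imp φ ψ ihφ ihψ =>
    intro α
    show (nSat _ _ α φ → nSat _ _ α ψ) ↔ (kSat _ _ _ φ → kSat _ _ _ ψ)
    rw [ihφ α, ihψ α]
  | box i φ ih =>
    intro α
    show {β | nSat _ _ β φ} ∈ nOmega (treeRel A k) α ↔ ∀ b, treeRel A k α.forget b → kSat _ _ b φ
    have hset : {β : PSeq A | nSat (fun _ : Fin 1 => nOmega (treeRel A k))
        (fun p => PSeq.forget ⁻¹' V p) β φ} = {β | kSat (fun _ : Fin 1 => treeRel A k) V β.forget φ} :=
      Set.ext fun β => ih β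
    rw [hset, mem_nOmega]
    constructor
    · rintro ⟨n, hn⟩ b hb
      obtain ⟨β, hβ, rfl⟩ := cover k α n hb
      exact hn hβ
    · intro h
      exact ⟨0, fun β hβ => h _ hβ.2⟩

lemma nlog_sub_klog {A : Type} (k : TreeKind) :
    NLog (nOmega (treeRel A k)) ⊆ KLog (treeRel A k) := by
  intro φ h V a
  have hb : (pext (pzero A) 0 a).forget = a := by
    rw [pext_forget _ _ (PSeq.st_le _ (fun _ _ => rfl)), pzero_forget]
    rfl
  have := h (fun p => PSeq.forget ⁻¹' V p) (pext (pzero A) 0 a)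
  rw [nsat_ksat k V φ _] at this
  rwa [hb] at this
lemma nsat_subst {X : Type} (τ : Fin 1 → X → Filter X) (V : ℕ → Set X) (s : ℕ → MF) (φ : MF) :
    ∀ x, nSat τ V x (φ.subst s) ↔ nSat τ (fun p => {y | nSat τ V y (s p)}) x φ := by
  induction φ with
  | prop p => intro x; exact Iff.rfl
  | bot => intro x; exact Iff.rfl
  | imp φ ψ ihφ ihψ =>
    intro x
    exact imp_congr (ihφ x) (ihψ x)
  | box i φ ih =>
    intro x
    show {y | nSat τ V y (φ.subst s)} ∈ τ i x ↔ _
    rw [Set.ext fun y => ih y]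
    exact Iff.rfl

lemma nlog_normal {X : Type} [Nonempty X] (τ : X → Filter X) : IsNormalLogic (NLog τ) := by
  constructor
  · intro φ h V x
    exact h (nSat (fun _ => τ) V x) (fun hf => hf) (fun ψ χ => Iff.rfl)
  · intro i p q V x
    intro h1 h2
    refine Filter.mem_of_superset (Filter.inter_mem h1 h2) ?_
    rintro y ⟨hy1, hy2⟩
    exact hy1 hy2
  · intro φ ψ h1 h2 V x
    exact h1 V x (h2 V x)
  · intro φ s h V x
    rw [nsat_subst]
    exact h _ x
  · intro i φ h V x
    show {y | nSat _ V y φ} ∈ _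
    have : {y | nSat (fun _ : Fin 1 => τ) V y φ} = Set.univ :=
      Set.eq_univ_of_forall fun y => h V y
    rw [this]
    exact Filter.univ_mem

lemma subset_normalClosure {n : ℕ} (Γ : Set (MFormula n)) : Γ ⊆ NormalClosure Γ :=
  fun φ h => Set.mem_sInter.mpr fun _ hL => hL.2 h

lemma normalClosure_min {n : ℕ} {Γ L : Set (MFormula n)} (hL : IsNormalLogic L) (h : Γ ⊆ L) :
    NormalClosure Γ ⊆ L := fun _ hφ => Set.mem_sInter.mp hφ L ⟨hL, h⟩

lemma normalClosure_normal {n : ℕ} (Γ : Set (MFormula n)) :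
    IsNormalLogic (NormalClosure Γ) := by
  constructor
  · intro φ h
    exact Set.mem_sInter.mpr fun L hL => hL.1.taut φ h
  · intro i p q
    exact Set.mem_sInter.mpr fun L hL => hL.1.kax i p q
  · intro φ ψ h1 h2
    exact Set.mem_sInter.mpr fun L hL =>
      hL.1.mp φ ψ (Set.mem_sInter.mp h1 L hL) (Set.mem_sInter.mp h2 L hL)
  · intro φ s h
    exact Set.mem_sInter.mpr fun L hL => hL.1.subst φ s (Set.mem_sInter.mp h L hL)
  · intro i φ h
    exact Set.mem_sInter.mpr fun L hL => hL.1.nec i φ (Set.mem_sInter.mp h L hL)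

lemma tax_inst {L : Set MF} (hL : IsNormalLogic L) (h : tAx ∈ L) (φ : MF) :
    (MFormula.box 0 φ).imp φ ∈ L := by
  have := hL.subst tAx (fun _ => φ) h
  simpa [tAx, MFormula.subst] using this

lemma fourax_inst {L : Set MF} (hL : IsNormalLogic L) (h : fourAx ∈ L) (φ : MF) :
    (MFormula.box 0 φ).imp (MFormula.box 0 (MFormula.box 0 φ)) ∈ L := by
  have := hL.subst fourAx (fun _ => φ) h
  simpa [fourAx, MFormula.subst] using this

lemma ser_of_dax {L : Set MF} (hL : IsNormalLogic L) (hd : dAx ∈ L) :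
    ∀ w, IsMCS L w → LCon L (boxInv w) := by
  intro w hw hcon
  obtain ⟨l, hl, hdl⟩ := hcon
  have m1 : impList (l.map (MFormula.box 0)) (MFormula.box 0 .bot) ∈ L := nec_impList hL hdl
  have m2 : MFormula.box 0 .bot ∈ w := by
    refine mcs_impList_mp hL hw ?_ (mcs_L_sub hL hw m1)
    intro x hx
    obtain ⟨χ, hχ, rfl⟩ := List.mem_map.mp hx
    exact hl χ hχ
  have inst : (MFormula.box 0 .bot).imp
      ((MFormula.box 0 (MFormula.bot.imp .bot)).imp .bot) ∈ L := by
    have := hL.subst dAx (fun _ => .bot) hd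
    simpa [dAx, MFormula.subst, MFormula.neg] using this
  have boxtaut : MFormula.box 0 (MFormula.bot.imp .bot) ∈ w := by
    refine mcs_L_sub hL hw (hL.nec 0 _ (hL.taut _ ?_))
    intro v hb hi
    rw [hi]
    exact id
  exact mcs_bot_not_mem hL hw
    (mcs_mp hL hw (mcs_mp hL hw (mcs_L_sub hL hw inst) m2) boxtaut)

lemma ser_of_tax {L : Set MF} (hL : IsNormalLogic L) (h : tAx ∈ L) :
    ∀ w, IsMCS L w → LCon L (boxInv w) := by
  intro w hw
  refine LCon.mono hw.con ?_
  intro χ hχ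
  exact mcs_mp hL hw (mcs_L_sub hL hw (tax_inst hL h χ)) hχ

lemma dax_valid {A : Type} [Infinite A] (k : TreeKind) :
    dAx ∈ NLog (nOmega (treeRel A k)) := by
  intro V α
  intro h1 h2
  obtain ⟨n, hn⟩ := mem_nOmega.mp (Filter.inter_mem h1 h2)
  obtain ⟨β, hβ⟩ := unbhd_nonempty k α n
  exact (hn hβ).2 (hn hβ).1

lemma tax_valid {A : Type} (k : TreeKind) (hrefl : ∀ a : List A, treeRel A k a a) :
    tAx ∈ NLog (nOmega (treeRel A k)) := by
  intro V α h1
  obtain ⟨n, hn⟩ := mem_nOmega.mp h1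
  exact hn ⟨fun i _ => rfl, hrefl _⟩

lemma unbhd_trans {A : Type} {R : List A → List A → Prop} (ht : Transitive R)
    {α β : PSeq A} {n : ℕ} (hβ : β ∈ Unbhd R n α) :
    Unbhd R (max n α.st) β ⊆ Unbhd R n α := by
  rintro γ ⟨g1, g2⟩
  refine ⟨fun i hi => ?_, ht hβ.2 g2⟩
  have h1 := hβ.1 i hi
  have h2 := g1 i (lt_of_lt_of_le hi (le_max_left _ _))
  exact h1.trans h2

lemma fourax_valid {A : Type} (k : TreeKind) (ht : Transitive (treeRel A k)) :
    fourAx ∈ NLog (nOmega (treeRel A k)) := by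
  intro V α h1
  obtain ⟨n, hn⟩ := mem_nOmega.mp h1
  refine mem_nOmega.mpr ⟨n, ?_⟩
  intro β hβ
  show {γ | nSat _ V γ (.prop 0)} ∈ nOmega (treeRel A k) β
  exact mem_nOmega.mpr ⟨max n α.st, (unbhd_trans ht hβ).trans hn⟩

lemma klogK_sub {X : Type} [Nonempty X] (τ : X → Filter X) : LogicK ⊆ NLog τ :=
  normalClosure_min (nlog_normal τ) (Set.empty_subset _)

/-- For the tree frames over a countably infinite alphabet:
`Log(N_ω(F_in)) = D`, `Log(N_ω(F_rn)) = T`, `Log(N_ω(F_it)) = D4`,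
`Log(N_ω(F_rt)) = S4`. -/
theorem log_nOmega_frames (A : Type) [Countable A] [Infinite A] :
    NLog (nOmega (treeRel A .inn)) = LogicD ∧
    NLog (nOmega (treeRel A .rn)) = LogicT ∧
    NLog (nOmega (treeRel A .itr)) = LogicD4 ∧
    NLog (nOmega (treeRel A .rt)) = LogicS4 := by
  have hKD : IsNormalLogic LogicD := normalClosure_normal _
  have hKT : IsNormalLogic LogicT := normalClosure_normal _
  have hKD4 : IsNormalLogic LogicD4 := normalClosure_normal _
  have hKS4 : IsNormalLogic LogicS4 := normalClosure_normal _
  have dD : dAx ∈ LogicD := subset_normalClosure _ (Or.inr rfl)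
  have tT : tAx ∈ LogicT := subset_normalClosure _ (Or.inr rfl)
  have dD4 : dAx ∈ LogicD4 := subset_normalClosure _ (Or.inl dD)
  have fD4 : fourAx ∈ LogicD4 := subset_normalClosure _ (Or.inr rfl)
  have tS4 : tAx ∈ LogicS4 := subset_normalClosure _ (Or.inl tT)
  have fS4 : fourAx ∈ LogicS4 := subset_normalClosure _ (Or.inr rfl)
  have hreflrn : ∀ a : List A, treeRel A .rn a a := fun a => Or.inl rfl
  have hreflrt : ∀ a : List A, treeRel A .rt a a := fun a => Relation.ReflTransGen.refl
  have htransitr : Transitive (treeRel A .itr) := fun _ _ _ h1 h2 => h1.trans h2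
  have htransrt : Transitive (treeRel A .rt) := fun _ _ _ h1 h2 => h1.trans h2
  refine ⟨?_, ?_, ?_, ?_⟩
  · apply Set.Subset.antisymm
    · exact (nlog_sub_klog .inn).trans (kripke_complete .inn hKD (ser_of_dax hKD dD)
        (by rintro (h | h) <;> simp at h) (by rintro (h | h) <;> simp at h))
    · exact normalClosure_min (nlog_normal _) (Set.union_subset (klogK_sub _)
        (Set.singleton_subset_iff.mpr (dax_valid .inn)))
  · apply Set.Subset.antisymm
    · exact (nlog_sub_klog .rn).trans (kripke_complete .rn hKT (ser_of_tax hKT tT)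
        (fun _ => tax_inst hKT tT) (by rintro (h | h) <;> simp at h))
    · exact normalClosure_min (nlog_normal _) (Set.union_subset (klogK_sub _)
        (Set.singleton_subset_iff.mpr (tax_valid .rn hreflrn)))
  · apply Set.Subset.antisymm
    · exact (nlog_sub_klog .itr).trans (kripke_complete .itr hKD4 (ser_of_dax hKD4 dD4)
        (by rintro (h | h) <;> simp at h) (fun _ => fourax_inst hKD4 fD4))
    · refine normalClosure_min (nlog_normal _) (Set.union_subset ?_
        (Set.singleton_subset_iff.mpr (fourax_valid .itr htransitr)))
      exact normalClosure_min (nlog_normal _) (Set.union_subset (klogK_sub _)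
        (Set.singleton_subset_iff.mpr (dax_valid .itr)))
  · apply Set.Subset.antisymm
    · exact (nlog_sub_klog .rt).trans (kripke_complete .rt hKS4 (ser_of_tax hKS4 tS4)
        (fun _ => tax_inst hKS4 tS4) (fun _ => fourax_inst hKS4 fS4))
    · refine normalClosure_min (nlog_normal _) (Set.union_subset ?_
        (Set.singleton_subset_iff.mpr (fourax_valid .rt htransrt)))
      exact normalClosure_min (nlog_normal _) (Set.union_subset (klogK_sub _)
        (Set.singleton_subset_iff.mpr (tax_valid .rt hreflrt)))
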